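/- arXiv:2411.10352 — 2 statements merged into one kernel-verified Lean document; each statement's English description precedes it below -/
import Mathlib

section
/- Let p ≥ 1 and for k ∈ {1,…,p−1} define f(k) = −(p−1) + (p−k)/k. Then max over unit vectors v of the Ricci curvature of the maximal product hypersurface H^k × H^{p−k} equals f(min(k,p−k)), and f(min(k,p−k)) = 0 if and only if min(k,p−k) = 1; moreover f(min(k,p−k)) < 0 for 2 ≤ min(k,p−k). -/
lemma aux_key (p m : ℕ) (hm : 1 ≤ m) (hmp : m < p) :
    -((p : ℝ) - 1) + ((p : ℝ) - (m : ℝ)) / (m : ℝ) = (p : ℝ) * (1 - (m : ℝ)) / (m : ℝ) := by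
  have hm0 : (m : ℝ) ≠ 0 := by positivity
  field_simp
  ring

/-- For `1 ≤ k ≤ p − 1`, with `f(m) = −(p−1) + (p−m)/m`, the maximum of the
Ricci curvature of the maximal product hypersurface `H^k × H^{p−k}` over unit vectors,
namely `−(p−1) + max((p−k)/k, k/(p−k))`, equals `f(min(k, p−k))`; this value vanishes
iff `min(k, p−k) = 1`, and is negative whenever `2 ≤ min(k, p−k)`. -/
theorem stmt_5 (p k : ℕ) (hk : 1 ≤ k) (hkp : k ≤ p - 1) (hp : 2 ≤ p)
    (f : ℕ → ℝ) (hf : ∀ m, f m = -((p : ℝ) - 1) + ((p : ℝ) - (m : ℝ)) / (m : ℝ)) :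
    (-((p : ℝ) - 1) + max (((p : ℝ) - (k : ℝ)) / (k : ℝ)) ((k : ℝ) / ((p : ℝ) - (k : ℝ)))
        = f (min k (p - k))) ∧
    (f (min k (p - k)) = 0 ↔ min k (p - k) = 1) ∧
    (2 ≤ min k (p - k) → f (min k (p - k)) < 0) := by
  have hkp' : k < p := by omega
  set m := min k (p - k) with hmdef
  have hm1 : 1 ≤ m := by omega
  have hmp : m < p := by omega
  have hm0 : (0 : ℝ) < (m : ℝ) := by exact_mod_cast hm1
  have hk0 : (0 : ℝ) < (k : ℝ) := by exact_mod_cast hk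
  have hpk0 : (0 : ℝ) < (p : ℝ) - (k : ℝ) := by
    have : (k : ℝ) < (p : ℝ) := by exact_mod_cast hkp'
    linarith
  have hp0 : (0 : ℝ) < (p : ℝ) := by positivity
  have hfirst : -((p : ℝ) - 1) + max (((p : ℝ) - (k : ℝ)) / (k : ℝ)) ((k : ℝ) / ((p : ℝ) - (k : ℝ)))
      = f m := by
    rw [hf]
    congr 1
    rcases le_or_gt k (p - k) with h | h
    · have hm : m = k := by omega
      have hle : (k : ℝ) ≤ (p : ℝ) - (k : ℝ) := by
        have : (k : ℝ) ≤ ((p - k : ℕ) : ℝ) := by exact_mod_cast h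
        have h2 : ((p - k : ℕ) : ℝ) = (p : ℝ) - (k : ℝ) := by
          push_cast [Nat.cast_sub hkp'.le]; ring
        linarith
      have : (k : ℝ) / ((p : ℝ) - (k : ℝ)) ≤ ((p : ℝ) - (k : ℝ)) / (k : ℝ) := by
        rw [div_le_div_iff₀ hpk0 hk0]; nlinarith
      rw [max_eq_left this, hm]
    · have hm : m = p - k := by omega
      have hmk : ((m : ℕ) : ℝ) = (p : ℝ) - (k : ℝ) := by
        rw [hm]; push_cast [Nat.cast_sub hkp'.le]; ring
      have hle : (p : ℝ) - (k : ℝ) ≤ (k : ℝ) := by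
        have : ((p - k : ℕ) : ℝ) ≤ (k : ℝ) := by exact_mod_cast h.le
        linarith [hmk, hm ▸ this]
      have : ((p : ℝ) - (k : ℝ)) / (k : ℝ) ≤ (k : ℝ) / ((p : ℝ) - (k : ℝ)) := by
        rw [div_le_div_iff₀ hk0 hpk0]; nlinarith
      rw [max_eq_right this, hmk]; ring_nf
  have hkey : f m = (p : ℝ) * (1 - (m : ℝ)) / (m : ℝ) := by
    rw [hf]; exact aux_key p m hm1 hmp
  refine ⟨hfirst, ?_, ?_⟩
  · rw [hkey]
    constructor
    · intro h
      have := (div_eq_zero_iff.mp h).resolve_right (ne_of_gt hm0)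
      have h2 : (1 : ℝ) - (m : ℝ) = 0 := by
        rcases mul_eq_zero.mp this with h3 | h3
        · exact absurd h3 (ne_of_gt hp0)
        · exact h3
      have : (m : ℝ) = 1 := by linarith
      exact_mod_cast this
    · intro h
      rw [h]; norm_num
  · intro h
    rw [hkey]
    have : (1 : ℝ) < (m : ℝ) := by exact_mod_cast h
    have : (p : ℝ) * (1 - (m : ℝ)) < 0 := by nlinarith
    exact div_neg_of_neg_of_pos this hm0
end

section
/- Let E → M be a Riemannian vector bundle with metric connection over a Riemannian manifold, and let α be a 1-form on M with values in E that is harmonic (Δα = 0 for the Hodge Laplacian). Then (1/2)Δ‖α‖² = ‖∇̄α‖² + ⟨S(α), α⟩, where S is the Weitzenböck curvature operator S(α)(X) = ∑ᵢ (R̄_{eᵢ,X}α)(eᵢ). -/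
/-- Bochner formula. For a harmonic 1-form `α` with values in a Riemannian
vector bundle `E` with metric connection, `(1/2)Δ‖α‖² = ‖∇̄α‖² + ⟨S(α),α⟩`, stated as
`Δ‖α‖² = 2(‖∇̄α‖² + ⟨S(α),α⟩)`. Formalized in the pointwise algebraic model: `VF` are
vector fields with Levi-Civita connection `nabla` and an orthonormal frame `e` parallel
at the point, `S` the sections of `E` with metric connection `D` and fiber metric `g`
valued in the ring `R` of functions, on which vector fields act by the derivation `der`;
`Δ` on functions is `∑ᵢ eᵢ·(eᵢ·f)` in the parallel frame, and the Hodge Laplacian,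
curvature operator `S(α)` and induced connection `D1` on 1-forms are as in the
Weitzenböck setup. -/
theorem stmt_8 {VF S R : Type*} [AddCommGroup VF] [AddCommGroup S] [CommRing R]
    {p : ℕ}
    (nabla : VF → VF → VF) (hnabla0 : ∀ Y, nabla 0 Y = 0)
    (D : VF → S → S)
    (hDadd : ∀ X, ∀ a b : S, D X (a + b) = D X a + D X b)
    (hD0 : ∀ s : S, D 0 s = 0)
    (e : Fin p → VF) (hpar : ∀ X i, nabla X (e i) = 0)
    -- fiber metric and its compatibility with the connection
    (g : S → S → R) (hgsymm : ∀ a b, g a b = g b a)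
    (hgadd : ∀ a b c, g (a + b) c = g a c + g b c)
    (der : VF → R → R) (hderadd : ∀ X f₁ f₂, der X (f₁ + f₂) = der X f₁ + der X f₂)
    (hmetric : ∀ X a b, der X (g a b) = g (D X a) b + g a (D X b))
    -- the 1-form α
    (α : VF → S) (hαadd : ∀ a b : VF, α (a + b) = α a + α b)
    -- induced connection on 1- and 2-forms, exterior derivative and codifferentials
    (D1 : VF → (VF → S) → VF → S)
    (hD1 : ∀ X β Y, D1 X β Y = D X (β Y) - β (nabla X Y))
    (D2 : VF → (VF → VF → S) → VF → VF → S)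
    (hD2 : ∀ X ω Y Z, D2 X ω Y Z = D X (ω Y Z) - ω (nabla X Y) Z - ω Y (nabla X Z))
    (dA : (VF → S) → VF → VF → S)
    (hdA : ∀ β X Y, dA β X Y = D1 X β Y - D1 Y β X)
    (codiff1 : (VF → S) → S)
    (hcodiff1 : ∀ β, codiff1 β = - ∑ i, D1 (e i) β (e i))
    (codiff2 : (VF → VF → S) → VF → S)
    (hcodiff2 : ∀ ω X, codiff2 ω X = - ∑ i, D2 (e i) ω (e i) X)
    (hodge : (VF → S) → VF → S)
    (hhodge : ∀ β X, hodge β X = D X (codiff1 β) + codiff2 (dA β) X)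
    (Rbar : VF → VF → (VF → S) → VF → S)
    (hRbar : ∀ X Y β, Rbar X Y β
      = fun Z => D1 X (D1 Y β) Z - D1 Y (D1 X β) Z - D1 (nabla X Y - nabla Y X) β Z)
    (Sop : (VF → S) → VF → S)
    (hSop : ∀ β X, Sop β X = ∑ i, Rbar (e i) X β (e i))
    -- α is harmonic
    (hharmonic : ∀ X, hodge α X = 0) :
    ∑ i, der (e i) (der (e i) (∑ j, g (α (e j)) (α (e j))))
      = 2 * ((∑ i, ∑ j, g (D1 (e i) α (e j)) (D1 (e i) α (e j)))
             + ∑ j, g (Sop α (e j)) (α (e j))) := by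

  -- basic consequences of additivity
  have hα0 : α 0 = 0 := by
    have h := hαadd 0 0
    rw [add_zero] at h
    exact left_eq_add.mp h
  have hDzero : ∀ X, D X 0 = 0 := by
    intro X
    have h := hDadd X 0 0
    rw [add_zero] at h
    exact left_eq_add.mp h
  have hDsub : ∀ X (a b : S), D X (a - b) = D X a - D X b := by
    intro X a b
    have h := hDadd X (a - b) b
    rw [sub_add_cancel] at h
    rw [eq_sub_iff_add_eq, ← h]
  have hDneg : ∀ X (a : S), D X (-a) = - D X a := by
    intro X a
    have h := hDsub X 0 a
    simpa [hDzero] using h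
  have hDsum : ∀ X (s : Fin p → S), D X (∑ i, s i) = ∑ i, D X (s i) := fun X s =>
    map_sum (AddMonoidHom.mk' (D X) (hDadd X)) s Finset.univ
  have hdersum : ∀ X (f : Fin p → R), der X (∑ i, f i) = ∑ i, der X (f i) := fun X f =>
    map_sum (AddMonoidHom.mk' (der X) (hderadd X)) f Finset.univ
  have hgsumL : ∀ (s : Fin p → S) (b : S), g (∑ i, s i) b = ∑ i, g (s i) b := fun s b =>
    map_sum (AddMonoidHom.mk' (fun a => g a b) (fun a a' => hgadd a a' b)) s Finset.univ
  -- the key identity: S(α) = trace of second covariant derivative, for harmonic α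
  have hT : ∀ j, Sop α (e j) = ∑ i, D (e i) (D (e i) (α (e j))) := by
    intro j
    have hh := hharmonic (e j)
    rw [hhodge, hcodiff1, hcodiff2] at hh
    have key : Sop α (e j)
        = (D (e j) (-∑ i, D1 (e i) α (e i)) + -∑ i, D2 (e i) (dA α) (e i) (e j))
          + ∑ i, D (e i) (D (e i) (α (e j))) := by
      simp only [hSop, hRbar, hD2, hdA, hD1, hpar, hnabla0, hα0, hD0, hDzero, hDneg, hDsum,
        hDsub, sub_zero, zero_sub, sub_self, neg_neg, neg_zero, sub_neg_eq_add,
        Finset.sum_sub_distrib, Finset.sum_add_distrib, Finset.sum_neg_distrib,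
        Finset.sum_const_zero]
      abel
    rw [key, hh, zero_add]
  -- simplify D1 on the frame
  have hD1e : ∀ i j, D1 (e i) α (e j) = D (e i) (α (e j)) := by
    intro i j
    rw [hD1, hpar, hα0, sub_zero]
  -- compute the left-hand side
  have L : ∑ i, der (e i) (der (e i) (∑ j, g (α (e j)) (α (e j))))
      = ∑ i, ∑ j, (g (D (e i) (D (e i) (α (e j)))) (α (e j))
          + g (D (e i) (α (e j))) (D (e i) (α (e j)))
          + (g (D (e i) (α (e j))) (D (e i) (α (e j)))
          + g (α (e j)) (D (e i) (D (e i) (α (e j)))))) := by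
    refine Finset.sum_congr rfl fun i _ => ?_
    have h1 : der (e i) (∑ j, g (α (e j)) (α (e j)))
        = ∑ j, (g (D (e i) (α (e j))) (α (e j)) + g (α (e j)) (D (e i) (α (e j)))) := by
      rw [hdersum]
      exact Finset.sum_congr rfl fun j _ => hmetric _ _ _
    rw [h1, hdersum]
    refine Finset.sum_congr rfl fun j _ => ?_
    rw [hderadd, hmetric, hmetric]
  rw [L]
  -- rewrite the right-hand side
  have hR1 : ∀ i j, g (D1 (e i) α (e j)) (D1 (e i) α (e j))
      = g (D (e i) (α (e j))) (D (e i) (α (e j))) := by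
    intro i j; rw [hD1e]
  have hR2 : ∀ j, g (Sop α (e j)) (α (e j))
      = ∑ i, g (D (e i) (D (e i) (α (e j)))) (α (e j)) := by
    intro j; rw [hT, hgsumL]
  calc ∑ i, ∑ j, (g (D (e i) (D (e i) (α (e j)))) (α (e j))
          + g (D (e i) (α (e j))) (D (e i) (α (e j)))
          + (g (D (e i) (α (e j))) (D (e i) (α (e j)))
          + g (α (e j)) (D (e i) (D (e i) (α (e j))))))
      = ∑ i, ∑ j, (2 * g (D (e i) (α (e j))) (D (e i) (α (e j)))
          + 2 * g (D (e i) (D (e i) (α (e j)))) (α (e j))) := by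
        refine Finset.sum_congr rfl fun i _ => Finset.sum_congr rfl fun j _ => ?_
        rw [hgsymm (α (e j)) (D (e i) (D (e i) (α (e j))))]
        ring
    _ = 2 * ((∑ i, ∑ j, g (D (e i) (α (e j))) (D (e i) (α (e j))))
          + ∑ j, ∑ i, g (D (e i) (D (e i) (α (e j)))) (α (e j))) := by
        have hc : ∑ j : Fin p, ∑ i : Fin p, g (D (e i) (D (e i) (α (e j)))) (α (e j))
            = ∑ i : Fin p, ∑ j : Fin p, g (D (e i) (D (e i) (α (e j)))) (α (e j)) :=
          Finset.sum_comm
        rw [hc]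
        simp only [mul_add, Finset.mul_sum, ← Finset.sum_add_distrib]
    _ = 2 * ((∑ i, ∑ j, g (D1 (e i) α (e j)) (D1 (e i) α (e j)))
          + ∑ j, g (Sop α (e j)) (α (e j))) := by
        simp only [hR1, hR2]
end
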